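/- Let N be a positive definite quadratic form on R^m and Λ^d N the induced form on Λ^d R^m defined by ⟨x₁∧…∧x_d, y₁∧…∧y_d⟩ = det(⟨x_i,y_j⟩_N). If N and N' are two positive definite forms whose norms are C-Lipschitz-equivalent, then the norms of Λ^d N and Λ^d N' are C^d-Lipschitz-equivalent. -/

import Mathlib

noncomputable section

/-- The decomposable element `x₁ ∧ … ∧ x_d` of the `d`-th exterior power. -/
def wedgeElt (d : ℕ) {E : Type*} [AddCommGroup E] [Module ℝ E] (v : Fin d → E) :
    ⋀[ℝ]^d E :=
  ⟨ExteriorAlgebra.ιMulti ℝ d v,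
    ExteriorAlgebra.ιMulti_range ℝ d (Set.mem_range_self v)⟩

lemma simul_diag {E : Type} [AddCommGroup E] [Module ℝ E] [FiniteDimensional ℝ E]
    {n : ℕ} (hn : Module.finrank ℝ E = n)
    (B B' : LinearMap.BilinForm ℝ E)
    (hBsymm : ∀ x y, B x y = B y x) (hB'symm : ∀ x y, B' x y = B' y x)
    (hBpos : ∀ x, x ≠ 0 → 0 < B x x) :
    ∃ (b : Fin n → E) (lam : Fin n → ℝ),
      Submodule.span ℝ (Set.range b) = ⊤ ∧
      (∀ i j, B (b i) (b j) = if i = j then 1 else 0) ∧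
      (∀ i j, B' (b i) (b j) = if i = j then lam i else 0) := by
  letI core : InnerProductSpace.Core ℝ E :=
    { inner := fun x y => B x y
      conj_inner_symm := fun x y => by simpa using hBsymm y x
      re_inner_nonneg := fun x => by
        rcases eq_or_ne x 0 with h | h
        · simp [h]
        · simpa using (hBpos x h).le
      add_left := fun x y z => by simp
      smul_left := fun x y r => by simp [mul_comm]
      definite := fun x hx => by
        by_contra h
        exact (hBpos x h).ne' hx }
  letI : NormedAddCommGroup E := core.toNormedAddCommGroup
  letI : InnerProductSpace ℝ E := InnerProductSpace.ofCore core.toCore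
  haveI : CompleteSpace E := FiniteDimensional.complete ℝ E
  have hinner : ∀ x y : E, (inner ℝ x y : ℝ) = B x y := fun x y => rfl
  let T : E →ₗ[ℝ] E :=
    { toFun := fun y => (InnerProductSpace.toDual ℝ E).symm
        (LinearMap.toContinuousLinearMap (B'.flip y))
      map_add' := fun y z => by simp [map_add]
      map_smul' := fun r y => by simp }
  have hT : ∀ (x y : E), (inner ℝ (T y) x : ℝ) = B' x y := fun x y => by
    simp [T, InnerProductSpace.toDual_symm_apply]
  have hTsymm : T.IsSymmetric := by
    intro x y
    rw [hT y x, hB'symm y x, ← hT x y, real_inner_comm]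
  set b := hTsymm.eigenvectorBasis hn with hb
  set lam := hTsymm.eigenvalues hn with hlam
  have h1 : ∀ i j, (inner ℝ (b i) (b j) : ℝ) = if i = j then 1 else 0 :=
    orthonormal_iff_ite.mp b.orthonormal
  have h2 : ∀ i j, B' (b i) (b j) = if i = j then lam i else 0 := fun i j => by
    rw [← hT (b i) (b j), hTsymm.apply_eigenvectorBasis, real_inner_smul_left, h1]
    rcases eq_or_ne i j with h | h
    · subst h; simp [hlam]
    · simp [h, Ne.symm h]
  exact ⟨b, lam, b.toBasis.span_eq, fun i j => by rw [← hinner, h1], h2⟩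

lemma span_wedge (m d : ℕ) (b : Fin m → (Fin m → ℝ))
    (hb : Submodule.span ℝ (Set.range b) = ⊤)
    (z : ⋀[ℝ]^d (Fin m → ℝ)) :
    z ∈ Submodule.span ℝ (Set.range (fun s : {s : Finset (Fin m) // s.card = d} =>
      wedgeElt d (fun i => b (Finset.orderIsoOfFin s.1 s.2 i)))) := by
  set e := fun s : {s : Finset (Fin m) // s.card = d} =>
      wedgeElt d (fun i => b (Finset.orderIsoOfFin s.1 s.2 i)) with he
  set S := Submodule.span ℝ (Set.range e) with hS
  set P := Submodule.map (⋀[ℝ]^d (Fin m → ℝ)).subtype S with hP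
  have key : ∀ v : Fin d → (Fin m → ℝ), ExteriorAlgebra.ιMulti ℝ d v ∈ P := by
    intro v
    have hmem : ∀ i, v i ∈ Submodule.span ℝ (Set.range b) := fun i => hb ▸ Submodule.mem_top
    have hex : ∀ i, ∃ c : Fin m → ℝ, ∑ j, c j • b j = v i := fun i =>
      (Submodule.mem_span_range_iff_exists_fun ℝ).mp (hmem i)
    choose c hc using hex
    have hbase : ∀ a : Fin d → Fin m, ExteriorAlgebra.ιMulti ℝ d (fun i => b (a i)) ∈ P := by
      intro a
      by_cases hinj : Function.Injective a
      · set s : Finset (Fin m) := Finset.univ.image a with hsdef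
        have hs : s.card = d := by
          rw [hsdef, Finset.card_image_of_injective _ hinj, Finset.card_univ, Fintype.card_fin]
        let aEquiv : Fin d ≃ {x // x ∈ s} :=
          Equiv.ofBijective (fun i => ⟨a i, Finset.mem_image_of_mem a (Finset.mem_univ i)⟩)
            (by
              rw [Fintype.bijective_iff_injective_and_card]
              constructor
              · intro i j hij
                exact hinj (congrArg Subtype.val hij)
              · simp [Fintype.card_coe, hs])
        set π : Equiv.Perm (Fin d) :=
          aEquiv.trans (Finset.orderIsoOfFin s hs).toEquiv.symm with hπ
        have hcomp : (fun i => b (a i))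
            = (fun i => b ((Finset.orderIsoOfFin s hs i : Fin m))) ∘ π := by
          funext i
          simp only [Function.comp_apply, hπ, Equiv.trans_apply]
          have : (Finset.orderIsoOfFin s hs) ((Finset.orderIsoOfFin s hs).toEquiv.symm (aEquiv i))
              = aEquiv i := by simp
          rw [this]
          simp [aEquiv, Equiv.ofBijective]
        rw [hcomp, AlternatingMap.map_perm]
        have hes : ExteriorAlgebra.ιMulti ℝ d
            (fun i => b ((Finset.orderIsoOfFin s hs i : Fin m))) ∈ P :=
          Submodule.mem_map_of_mem (Submodule.subset_span
            (Set.mem_range_self (⟨s, hs⟩ : {s : Finset (Fin m) // s.card = d})))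
        rcases Int.units_eq_one_or (Equiv.Perm.sign π) with h | h
        · simpa [h] using hes
        · rw [h, Units.smul_def]
          simpa using Submodule.neg_mem _ hes
      · rw [Function.not_injective_iff] at hinj
        obtain ⟨i, j, hij, hne⟩ := hinj
        have : ExteriorAlgebra.ιMulti ℝ d (fun i => b (a i)) = 0 :=
          AlternatingMap.map_eq_zero_of_eq _ _ (by rw [hij]) hne
        rw [this]; exact Submodule.zero_mem P
    have hveq : v = fun i => ∑ j, c i j • b j := funext fun i => (hc i).symm
    rw [hveq]
    have hsum : ExteriorAlgebra.ιMulti ℝ d (fun i => ∑ j, c i j • b j) =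
        ∑ a : Fin d → Fin m, (∏ i, c i (a i)) • ExteriorAlgebra.ιMulti ℝ d (fun i => b (a i)) := by
      rw [show (ExteriorAlgebra.ιMulti ℝ d) (fun i => ∑ j, c i j • b j)
          = (ExteriorAlgebra.ιMulti ℝ d).toMultilinearMap (fun i => ∑ j, c i j • b j) from rfl]
      rw [MultilinearMap.map_sum]
      funext
      congr 1
      funext a
      rw [MultilinearMap.map_smul_univ]
      rfl
    rw [hsum]
    exact Submodule.sum_mem P fun a _ => Submodule.smul_mem P _ (hbase a)
  have hz : (z : ExteriorAlgebra ℝ (Fin m → ℝ)) ∈ P := by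
    have hz2 : (z : ExteriorAlgebra ℝ (Fin m → ℝ)) ∈
        Submodule.span ℝ (Set.range (ExteriorAlgebra.ιMulti ℝ d)) := by
      rw [ExteriorAlgebra.ιMulti_span_fixedDegree]
      exact z.2
    exact Submodule.span_le.mpr (Set.range_subset_iff.mpr key) hz2
  obtain ⟨w, hw, hweq⟩ := hz
  have : w = z := Subtype.ext hweq
  exact this ▸ hw

lemma bilin_expand {M : Type*} [AddCommGroup M] [Module ℝ M] {ι : Type*} [Fintype ι]
    (G : LinearMap.BilinForm ℝ M) (e : ι → M) (c : ι → ℝ) :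
    G (∑ s, c s • e s) (∑ t, c t • e t) = ∑ s, ∑ t, (c s * c t) * G (e s) (e t) := by
  simp only [map_sum, map_smul, LinearMap.sum_apply, LinearMap.smul_apply, smul_eq_mul,
    Finset.mul_sum]
  rw [Finset.sum_comm]
  refine Finset.sum_congr rfl fun s _ => Finset.sum_congr rfl fun t _ => by ring

lemma gram_det (m d : ℕ) (b : Fin m → (Fin m → ℝ)) (lam : Fin m → ℝ)
    (B : LinearMap.BilinForm ℝ (Fin m → ℝ))
    (hdiag : ∀ i j, B (b i) (b j) = if i = j then lam i else 0)
    (s t : {s : Finset (Fin m) // s.card = d}) :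
    Matrix.det (Matrix.of fun i j => B (b (Finset.orderIsoOfFin s.1 s.2 i))
        (b (Finset.orderIsoOfFin t.1 t.2 j))) =
      if s = t then ∏ x ∈ s.1, lam x else 0 := by
  rcases eq_or_ne s t with hst | hst
  · subst hst
    rw [if_pos rfl]
    have hmat : (Matrix.of fun i j => B (b (Finset.orderIsoOfFin s.1 s.2 i))
        (b (Finset.orderIsoOfFin s.1 s.2 j)))
        = Matrix.diagonal (fun i => lam (Finset.orderIsoOfFin s.1 s.2 i)) := by
      ext i j
      rw [Matrix.of_apply, hdiag]
      rcases eq_or_ne i j with h | h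
      · subst h; simp
      · have hne : ((Finset.orderIsoOfFin s.1 s.2 i : Fin m))
            ≠ (Finset.orderIsoOfFin s.1 s.2 j : Fin m) := by
          intro hc
          exact h ((Finset.orderIsoOfFin s.1 s.2).injective (Subtype.ext hc))
        rw [if_neg hne, Matrix.diagonal_apply_ne _ h]
    rw [hmat, Matrix.det_diagonal]
    rw [← Finset.prod_coe_sort s.1 lam]
    exact Fintype.prod_equiv (Finset.orderIsoOfFin s.1 s.2).toEquiv _ _ (fun i => rfl)
  · rw [if_neg hst]
    have hst' : s.1 ≠ t.1 := fun h => hst (Subtype.ext h)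
    have hns : ¬ s.1 ⊆ t.1 := fun hsub =>
      hst' (Finset.eq_of_subset_of_card_le hsub (by rw [s.2, t.2]))
    obtain ⟨x, hxs, hxt⟩ := Finset.not_subset.mp hns
    apply Matrix.det_eq_zero_of_row_eq_zero ((Finset.orderIsoOfFin s.1 s.2).symm ⟨x, hxs⟩)
    intro j
    rw [Matrix.of_apply, OrderIso.apply_symm_apply, hdiag]
    have hne : x ≠ (Finset.orderIsoOfFin t.1 t.2 j : Fin m) := by
      intro hc
      exact hxt (hc ▸ (Finset.orderIsoOfFin t.1 t.2 j).2)
    rw [if_neg hne]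

/-- If the norms of two positive definite forms `B`, `B'` on `ℝ^m` are
`C`-Lipschitz-equivalent, then the norms of the induced Gram-determinant forms on the
`d`-th exterior power are `C^d`-Lipschitz-equivalent. -/
theorem exterior_power_norm_lipschitz (m d : ℕ)
    (B B' : LinearMap.BilinForm ℝ (Fin m → ℝ))
    (hBsymm : ∀ x y, B x y = B y x) (hB'symm : ∀ x y, B' x y = B' y x)
    (hBpos : ∀ x : Fin m → ℝ, x ≠ 0 → 0 < B x x)
    (hB'pos : ∀ x : Fin m → ℝ, x ≠ 0 → 0 < B' x x)
    (C : ℝ) (hC : 0 < C)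
    (hlip : ∀ x : Fin m → ℝ, C⁻¹ * Real.sqrt (B x x) ≤ Real.sqrt (B' x x) ∧
      Real.sqrt (B' x x) ≤ C * Real.sqrt (B x x))
    (BΛ BΛ' : LinearMap.BilinForm ℝ (⋀[ℝ]^d (Fin m → ℝ)))
    (hBΛ : ∀ v w : Fin d → (Fin m → ℝ),
      BΛ (wedgeElt d v) (wedgeElt d w) = Matrix.det (Matrix.of fun i j => B (v i) (w j)))
    (hBΛ' : ∀ v w : Fin d → (Fin m → ℝ),
      BΛ' (wedgeElt d v) (wedgeElt d w) = Matrix.det (Matrix.of fun i j => B' (v i) (w j))) :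
    ∀ z : ⋀[ℝ]^d (Fin m → ℝ),
      (C ^ d)⁻¹ * Real.sqrt (BΛ z z) ≤ Real.sqrt (BΛ' z z) ∧
      Real.sqrt (BΛ' z z) ≤ C ^ d * Real.sqrt (BΛ z z) := by
  intro z
  obtain ⟨b, lam, hspan, hBdiag, hB'diag⟩ :=
    simul_diag (Module.finrank_fin_fun ℝ) B B' hBsymm hB'symm hBpos
  have hbne : ∀ i, b i ≠ 0 := by
    intro i h
    have h1 := hBdiag i i
    rw [h, if_pos rfl] at h1
    simp at h1
  have hlam_pos : ∀ i, 0 < lam i := fun i => by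
    have := hB'pos (b i) (hbne i)
    rwa [hB'diag i i, if_pos rfl] at this
  have hsq : ∀ i, C⁻¹ ≤ Real.sqrt (lam i) ∧ Real.sqrt (lam i) ≤ C := fun i => by
    have h1 := hlip (b i)
    rw [hBdiag i i, if_pos rfl, hB'diag i i, if_pos rfl, Real.sqrt_one, mul_one, mul_one] at h1
    exact h1
  have hlam_ub : ∀ i, lam i ≤ C ^ 2 := fun i => by
    have := pow_le_pow_left₀ (Real.sqrt_nonneg (lam i)) (hsq i).2 2
    rwa [Real.sq_sqrt (hlam_pos i).le] at this
  have hlam_lb : ∀ i, C⁻¹ ^ 2 ≤ lam i := fun i => by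
    have := pow_le_pow_left₀ (inv_nonneg.mpr hC.le) (hsq i).1 2
    rwa [Real.sq_sqrt (hlam_pos i).le] at this
  obtain ⟨c, hc⟩ := (Submodule.mem_span_range_iff_exists_fun ℝ).mp (span_wedge m d b hspan z)
  set e := fun s : {s : Finset (Fin m) // s.card = d} =>
    wedgeElt d (fun i => b (Finset.orderIsoOfFin s.1 s.2 i)) with he
  have hBe : ∀ s t, BΛ (e s) (e t) = if s = t then 1 else 0 := fun s t => by
    rw [he, hBΛ, gram_det m d b (fun _ => 1) B (fun i j => by simpa using hBdiag i j) s t]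
    simp
  have hB'e : ∀ s t, BΛ' (e s) (e t) = if s = t then ∏ x ∈ s.1, lam x else 0 := fun s t => by
    rw [he, hBΛ', gram_det m d b lam B' hB'diag s t]
  have hQ : BΛ z z = ∑ s, (c s) ^ 2 := by
    rw [← hc, bilin_expand]
    refine Finset.sum_congr rfl fun s _ => ?_
    rw [Finset.sum_eq_single s]
    · rw [hBe, if_pos rfl]; ring
    · intro t _ hts
      rw [hBe, if_neg (Ne.symm hts), mul_zero]
    · intro h; exact absurd (Finset.mem_univ s) h
  have hQ' : BΛ' z z = ∑ s, (c s) ^ 2 * ∏ x ∈ s.1, lam x := by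
    rw [← hc, bilin_expand]
    refine Finset.sum_congr rfl fun s _ => ?_
    rw [Finset.sum_eq_single s]
    · rw [hB'e, if_pos rfl]; ring
    · intro t _ hts
      rw [hB'e, if_neg (Ne.symm hts), mul_zero]
    · intro h; exact absurd (Finset.mem_univ s) h
  have hub : BΛ' z z ≤ (C ^ d) ^ 2 * BΛ z z := by
    rw [hQ, hQ', Finset.mul_sum]
    refine Finset.sum_le_sum fun s _ => ?_
    have hP : ∏ x ∈ s.1, lam x ≤ (C ^ d) ^ 2 := by
      calc ∏ x ∈ s.1, lam x ≤ ∏ _x ∈ s.1, C ^ 2 :=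
            Finset.prod_le_prod (fun x _ => (hlam_pos x).le) (fun x _ => hlam_ub x)
        _ = (C ^ d) ^ 2 := by rw [Finset.prod_const, s.2]; ring
    calc (c s) ^ 2 * ∏ x ∈ s.1, lam x ≤ (c s) ^ 2 * (C ^ d) ^ 2 :=
          mul_le_mul_of_nonneg_left hP (sq_nonneg _)
      _ = (C ^ d) ^ 2 * (c s) ^ 2 := mul_comm _ _
  have hlb : ((C ^ d)⁻¹) ^ 2 * BΛ z z ≤ BΛ' z z := by
    rw [hQ, hQ', Finset.mul_sum]
    refine Finset.sum_le_sum fun s _ => ?_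
    have hP : ((C ^ d)⁻¹) ^ 2 ≤ ∏ x ∈ s.1, lam x := by
      calc ((C ^ d)⁻¹) ^ 2 = ∏ _x ∈ s.1, C⁻¹ ^ 2 := by
            rw [Finset.prod_const, s.2]; ring
        _ ≤ ∏ x ∈ s.1, lam x :=
            Finset.prod_le_prod (fun x _ => by positivity) (fun x _ => hlam_lb x)
    calc ((C ^ d)⁻¹) ^ 2 * (c s) ^ 2 = (c s) ^ 2 * ((C ^ d)⁻¹) ^ 2 := mul_comm _ _
      _ ≤ (c s) ^ 2 * ∏ x ∈ s.1, lam x := mul_le_mul_of_nonneg_left hP (sq_nonneg _)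
  have h1 : Real.sqrt (BΛ' z z) ≤ C ^ d * Real.sqrt (BΛ z z) := by
    have h := Real.sqrt_le_sqrt hub
    rwa [Real.sqrt_mul (sq_nonneg (C ^ d)), Real.sqrt_sq (by positivity : (0:ℝ) ≤ C ^ d)] at h
  have h2 : (C ^ d)⁻¹ * Real.sqrt (BΛ z z) ≤ Real.sqrt (BΛ' z z) := by
    have h := Real.sqrt_le_sqrt hlb
    rwa [Real.sqrt_mul (sq_nonneg ((C ^ d)⁻¹)),
      Real.sqrt_sq (by positivity : (0:ℝ) ≤ (C ^ d)⁻¹)] at h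
  exact ⟨h2, h1⟩
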